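/- Let P be a polynomial generic representation over a finite field, e ≥ −1, and R a subrepresentation of P_{>e}. Then (P/R)_{>e} ≅ P_{>e}/R, where for a polynomial representation Q, Q_{>e} denotes the unique minimal subrepresentation with deg(Q/Q_{>e}) ≤ e. -/

import Mathlib

/-- A generic representation over `K`, presented on the skeleton `n ↦ K^n` of the category
of finite-dimensional `K`-vector spaces: a functor `Vec → Vec`. -/
structure GenRep (K : Type) [Field K] where
  obj : ℕ → Type
  [addcg : ∀ n, AddCommGroup (obj n)]
  [mod : ∀ n, Module K (obj n)]
  map : ∀ {m n : ℕ}, ((Fin m → K) →ₗ[K] (Fin n → K)) → (obj m →ₗ[K] obj n)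
  map_id : ∀ n : ℕ, map (LinearMap.id : (Fin n → K) →ₗ[K] (Fin n → K)) = LinearMap.id
  map_comp : ∀ {m n p : ℕ} (φ : (Fin m → K) →ₗ[K] (Fin n → K))
    (ψ : (Fin n → K) →ₗ[K] (Fin p → K)), map (ψ ∘ₗ φ) = map ψ ∘ₗ map φ

attribute [instance] GenRep.addcg GenRep.mod

variable {K : Type} [Field K]

/-- `f : (α → K) → W` is (given by) a polynomial of (total) degree at most `e` in the
coordinates, with coefficients in the `K`-module `W`.  For `e = -1` this forces `f = 0`. -/
def PolyDeg (K : Type) [Field K] {α : Type} [Fintype α] {W : Type} [AddCommGroup W]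
    [Module K W] (e : ℤ) (f : (α → K) → W) : Prop :=
  ∃ (s : Finset (α →₀ ℕ)) (c : (α →₀ ℕ) → W),
    (∀ m ∈ s, ((m.sum fun _ k => k : ℕ) : ℤ) ≤ e) ∧
    ∀ x : α → K, f x = ∑ m ∈ s, (∏ a ∈ m.support, x a ^ m a) • c m

/-- A generic representation has degree at most `e` if all its maps
`Hom(K^m, K^n) → Hom(P(K^m), P(K^n))` are polynomial of degree `≤ e` in the matrix entries. -/
def GenRep.HasDegLE (P : GenRep K) (e : ℤ) : Prop :=
  ∀ m n : ℕ, PolyDeg K e (fun x : Fin n × Fin m → K =>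
    P.map ((Matrix.of fun i j => x (i, j)).mulVecLin))

/-- A generic representation is polynomial if it has some finite degree. -/
def GenRep.IsPoly (P : GenRep K) : Prop := ∃ e : ℤ, P.HasDegLE e

/-- `P` has degree exactly `d`. -/
def GenRep.IsDegree (P : GenRep K) (d : ℤ) : Prop :=
  P.HasDegLE d ∧ ∀ e : ℤ, P.HasDegLE e → d ≤ e

/-- A subrepresentation of a generic representation. -/
structure SubRep (P : GenRep K) where
  carrier : ∀ n : ℕ, Submodule K (P.obj n)
  stable : ∀ {m n : ℕ} (φ : (Fin m → K) →ₗ[K] (Fin n → K)),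
    ∀ x ∈ carrier m, P.map φ x ∈ carrier n

/-- The quotient representation `P/N` has degree at most `e`; expressed via the composites
`mkQ ∘ P(φ)`, which present the maps of `P/N`. -/
def QuotDegLE (P : GenRep K) (N : SubRep P) (e : ℤ) : Prop :=
  ∀ m n : ℕ, PolyDeg K e (fun x : Fin n × Fin m → K =>
    (N.carrier n).mkQ ∘ₗ P.map ((Matrix.of fun i j => x (i, j)).mulVecLin))

/-- `N` is the top part `P_{>e}`: the inclusion-wise minimal subrepresentation of `P` whose
quotient has degree at most `e`. -/
def IsTopPart (P : GenRep K) (e : ℤ) (N : SubRep P) : Prop :=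
  QuotDegLE P N e ∧ ∀ N' : SubRep P, QuotDegLE P N' e → ∀ n, N.carrier n ≤ N'.carrier n

/-- A morphism (natural transformation) of generic representations. -/
structure RepHom (P Q : GenRep K) where
  app : ∀ n : ℕ, P.obj n →ₗ[K] Q.obj n
  natural : ∀ {m n : ℕ} (φ : (Fin m → K) →ₗ[K] (Fin n → K)),
    app n ∘ₗ P.map φ = Q.map φ ∘ₗ app m

/-- The quotient generic representation `P/R`. -/
def GenRep.quot (P : GenRep K) (R : SubRep P) : GenRep K where
  obj n := P.obj n ⧸ R.carrier n
  map φ := Submodule.mapQ _ _ (P.map φ) (fun x hx => R.stable φ x hx)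
  map_id n := by
    apply Submodule.linearMap_qext
    ext x
    simp [Submodule.mapQ_apply, P.map_id]
  map_comp φ ψ := by
    apply Submodule.linearMap_qext
    ext x
    simp [Submodule.mapQ_apply, P.map_comp]

section Aux

variable {K : Type} [Field K]

lemma polyDeg_comp {α : Type} [Fintype α] {W W' : Type} [AddCommGroup W] [Module K W]
    [AddCommGroup W'] [Module K W'] (L : W →ₗ[K] W') {e : ℤ} {f : (α → K) → W}
    (hf : PolyDeg K e f) : PolyDeg K e (fun x => L (f x)) := by
  obtain ⟨s, c, hs, hx⟩ := hf
  exact ⟨s, fun m => L (c m), hs, fun x => by simp [hx x, map_sum, map_smul]⟩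

/-- Conjugation `h ↦ A ∘ₗ h ∘ₗ B` as a linear map on spaces of linear maps. -/
def conjLM {X X' Y Y' : Type} [AddCommGroup X] [Module K X] [AddCommGroup X'] [Module K X']
    [AddCommGroup Y] [Module K Y] [AddCommGroup Y'] [Module K Y']
    (A : Y →ₗ[K] Y') (B : X' →ₗ[K] X) : (X →ₗ[K] Y) →ₗ[K] (X' →ₗ[K] Y') where
  toFun h := A ∘ₗ h ∘ₗ B
  map_add' h₁ h₂ := by ext x; simp
  map_smul' r h := by ext x; simp

lemma polyDeg_congr {α : Type} [Fintype α] {W : Type} [AddCommGroup W] [Module K W]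
    {e : ℤ} {f g : (α → K) → W} (h : ∀ x, f x = g x) (hf : PolyDeg K e f) :
    PolyDeg K e g := by
  obtain ⟨s, c, hs, hx⟩ := hf
  exact ⟨s, c, hs, fun x => (h x) ▸ hx x⟩

end Aux

/-- For a polynomial generic representation `P`, `e ≥ -1`, and a subrepresentation
`R ⊆ P_{>e}`, one has `(P/R)_{>e} ≅ P_{>e}/R`: the image of `P_{>e}` under the quotient
maps is a top part of `P/R`, and any top part of `P/R` equals this image. -/
theorem stmt12 (K : Type) [Field K] [Fintype K] (P : GenRep K) (hP : P.IsPoly)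
    (e : ℤ) (he : -1 ≤ e) (N : SubRep P) (hN : IsTopPart P e N)
    (R : SubRep P) (hRN : ∀ n, R.carrier n ≤ N.carrier n) :
    (∃ N' : SubRep (P.quot R), IsTopPart (P.quot R) e N' ∧
      ∀ n, N'.carrier n = (N.carrier n).map (R.carrier n).mkQ) ∧
    (∀ N' : SubRep (P.quot R), IsTopPart (P.quot R) e N' →
      ∀ n, N'.carrier n = (N.carrier n).map (R.carrier n).mkQ) := by
  classical
  -- The candidate top part of `P/R`: the image of `N`.
  set N' : SubRep (P.quot R) :=
    { carrier := fun n => (N.carrier n).map (R.carrier n).mkQ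
      stable := by
        intro m n φ x hx
        obtain ⟨y, hy, rfl⟩ := hx
        refine ⟨P.map φ y, N.stable φ y hy, ?_⟩
        rfl } with hN'def
  -- Claim A: the quotient of `P/R` by `N'` has degree ≤ e.
  have claimA : QuotDegLE (P.quot R) N' e := by
    intro m n
    obtain ⟨s, hsec⟩ := ((R.carrier m).mkQ).exists_rightInverse_of_surjective
      (Submodule.range_mkQ _)
    have hle : N.carrier n ≤ (N'.carrier n).comap (R.carrier n).mkQ :=
      Submodule.le_comap_map _ _
    refine polyDeg_congr (f := fun x : Fin n × Fin m → K =>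
        (conjLM (Submodule.mapQ (N.carrier n) (N'.carrier n) (R.carrier n).mkQ hle) s)
          ((N.carrier n).mkQ ∘ₗ P.map ((Matrix.of fun i j => x (i, j)).mulVecLin)))
      ?_ (polyDeg_comp _ (hN.1 m n))
    intro x
    refine LinearMap.ext fun z => ?_
    have hz : (R.carrier m).mkQ (s z) = z := LinearMap.congr_fun hsec z
    conv_rhs => rw [← hz]
    rfl
  -- Claim B: minimality of `N'`.
  have claimB : ∀ N'' : SubRep (P.quot R), QuotDegLE (P.quot R) N'' e →
      ∀ n, N'.carrier n ≤ N''.carrier n := by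
    intro N'' hq n
    -- the preimage subrepresentation of `N''` in `P`
    set M : SubRep P :=
      { carrier := fun n => (N''.carrier n).comap (R.carrier n).mkQ
        stable := by
          intro m n φ x hx
          have : (R.carrier n).mkQ (P.map φ x) = (P.quot R).map φ ((R.carrier m).mkQ x) := by
            rfl
          show (R.carrier n).mkQ (P.map φ x) ∈ N''.carrier n
          rw [this]
          exact N''.stable φ _ hx } with hMdef
    have hM : QuotDegLE P M e := by
      intro m n
      set π : P.obj n →ₗ[K] ((P.quot R).obj n ⧸ N''.carrier n) :=
        (N''.carrier n).mkQ ∘ₗ (R.carrier n).mkQ with hπdef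
      have hπsurj : LinearMap.range π = ⊤ := by
        rw [LinearMap.range_eq_top]
        exact (Submodule.mkQ_surjective _).comp (Submodule.mkQ_surjective _)
      obtain ⟨s', hsec'⟩ := π.exists_rightInverse_of_surjective hπsurj
      refine polyDeg_congr (f := fun x : Fin n × Fin m → K =>
          (conjLM ((M.carrier n).mkQ ∘ₗ s') ((R.carrier m).mkQ))
            ((N''.carrier n).mkQ ∘ₗ (P.quot R).map ((Matrix.of fun i j => x (i, j)).mulVecLin)))
        ?_ (polyDeg_comp _ (hq m n))
      intro x
      refine LinearMap.ext fun y => ?_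
      have h2 : ∀ w : P.obj n, (M.carrier n).mkQ (s' (π w)) = (M.carrier n).mkQ w := by
        intro w
        have h0 : π (s' (π w) - w) = 0 := by
          have h := LinearMap.congr_fun hsec' (π w)
          simp only [LinearMap.comp_apply, LinearMap.id_apply] at h
          rw [map_sub, h, sub_self]
        have hm : s' (π w) - w ∈ M.carrier n := by
          have h0' : (N''.carrier n).mkQ ((R.carrier n).mkQ (s' (π w) - w)) = 0 := h0
          exact (Submodule.Quotient.mk_eq_zero (N''.carrier n)).mp h0'
        rw [Submodule.mkQ_apply, Submodule.mkQ_apply, Submodule.Quotient.eq]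
        exact hm
      have h1 : (N''.carrier n).mkQ
          ((P.quot R).map ((Matrix.of fun i j => x (i, j)).mulVecLin) ((R.carrier m).mkQ y)) =
          π (P.map ((Matrix.of fun i j => x (i, j)).mulVecLin) y) := by
        rfl
      simp only [conjLM, LinearMap.coe_mk, AddHom.coe_mk, LinearMap.comp_apply]
      exact (congrArg (fun t => (M.carrier n).mkQ (s' t)) h1).trans (h2 _)
    intro z hz
    obtain ⟨y, hy, rfl⟩ := hz
    exact hN.2 M hM n hy
  refine ⟨⟨N', ⟨claimA, claimB⟩, fun n => rfl⟩, ?_⟩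
  intro N'' hN'' n
  exact le_antisymm (hN''.2 N' claimA n) (claimB N'' hN''.1 n)
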